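/- arXiv:2505.12049 — 4 statements merged into one kernel-verified Lean document; each statement's English description precedes it below -/
import Mathlib

section
/- The 2-dimensional utility representation with a single unsafe outcome is unique up to transformations u ↦ A u + b with A in LT+(2), b in R^2: if u and v are two 2-dimensional linear lexicographic utility functions representing the same preference relation satisfying the single-unsafe-outcome assumptions (with a strict preference between two safe outcomes), then there exist A in LT+(2) and b in R^2 such that v = A u + b. -/
set_option linter.unusedSectionVars false
set_option maxHeartbeats 1000000


variable {O : Type*} [Fintype O] [DecidableEq O]

/-- A lottery: a probability distribution on the finite outcome set `O`. -/
def IsLottery (p : O → ℝ) : Prop := (∀ o, 0 ≤ p o) ∧ ∑ o, p o = 1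

/-- The Dirac lottery concentrated at outcome `o`. -/
def dirac (o : O) : O → ℝ := fun o' => if o' = o then 1 else 0

/-- Indifference induced by a preference relation. -/
def Indiff (pref : (O → ℝ) → (O → ℝ) → Prop) (p q : O → ℝ) : Prop :=
  pref p q ∧ pref q p

/-- A safe outcome: one not indifferent to the unsafe outcome `odag`. -/
def SafeOutcome (pref : (O → ℝ) → (O → ℝ) → Prop) (odag : O) (o : O) : Prop :=
  ¬ Indiff pref (dirac o) (dirac odag)

/-- A lottery supported on safe outcomes. -/
def SafeLottery (pref : (O → ℝ) → (O → ℝ) → Prop) (odag : O) (p : O → ℝ) : Prop :=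
  IsLottery p ∧ ∀ o, ¬ SafeOutcome pref odag o → p o = 0

/-- Strict lexicographic order on `ℝ²`. -/
def lexGT2 (u v : Fin 2 → ℝ) : Prop :=
  v 0 < u 0 ∨ (u 0 = v 0 ∧ v 1 < u 1)

/-- Weak lexicographic order on `ℝ²`. -/
def lexGE2 (u v : Fin 2 → ℝ) : Prop := u = v ∨ lexGT2 u v

/-- `LT⁺(2)`: 2×2 lower triangular matrices with strictly positive diagonal. -/
def LTpos2 : Set (Matrix (Fin 2) (Fin 2) ℝ) :=
  {A | (∀ i j : Fin 2, i < j → A i j = 0) ∧ ∀ i : Fin 2, 0 < A i i}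

lemma dirac_isLottery (o : O) : IsLottery (dirac o) := by
  constructor
  · intro o'
    by_cases h : o' = o <;> simp [dirac, h]
  · simp [dirac]

lemma mix_isLottery {p q : O → ℝ} (hp : IsLottery p) (hq : IsLottery q)
    {α : ℝ} (h0 : 0 ≤ α) (h1 : α ≤ 1) : IsLottery (α • p + (1 - α) • q) := by
  constructor
  · intro o
    have h2 := hp.1 o; have h3 := hq.1 o
    simp only [Pi.add_apply, Pi.smul_apply, smul_eq_mul]
    nlinarith
  · simp only [Pi.add_apply, Pi.smul_apply, smul_eq_mul, Finset.sum_add_distrib,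
      ← Finset.mul_sum, hp.2, hq.2]
    ring

lemma lexGE2_total (x y : Fin 2 → ℝ) : lexGE2 x y ∨ lexGE2 y x := by
  rcases lt_trichotomy (x 0) (y 0) with h | h | h
  · exact Or.inr (Or.inr (Or.inl h))
  · rcases lt_trichotomy (x 1) (y 1) with h' | h' | h'
    · exact Or.inr (Or.inr (Or.inr ⟨h.symm, h'⟩))
    · left; left; funext i; fin_cases i
      · exact h
      · exact h'
    · exact Or.inl (Or.inr (Or.inr ⟨h, h'⟩))
  · exact Or.inl (Or.inr (Or.inl h))

lemma lexGE2_antisymm {x y : Fin 2 → ℝ} (h1 : lexGE2 x y) (h2 : lexGE2 y x) : x = y := by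
  rcases h1 with h1 | h1
  · exact h1
  · rcases h2 with h2 | h2
    · exact h2.symm
    · exfalso
      rcases h1 with a | ⟨a, b⟩ <;> rcases h2 with c | ⟨c, d⟩ <;> linarith

lemma eps_lemma {a x y : ℝ} (h : ∀ ε : ℝ, 0 < ε → ε ≤ 1 → ε * a + (1 - ε) * x ≤ y) :
    x ≤ y := by
  by_contra hxy
  push_neg at hxy
  have hMpos : (0:ℝ) < max (x - a) 1 := lt_of_lt_of_le one_pos (le_max_right _ _)
  set M := max (x - a) 1 with hM
  have hMne : M ≠ 0 := ne_of_gt hMpos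
  have hq : 0 < (x - y) / (2 * M) := div_pos (by linarith) (by linarith)
  set ε := min 1 ((x - y) / (2 * M)) with hε
  have hεpos : 0 < ε := lt_min one_pos hq
  have hε1 : ε ≤ 1 := min_le_left _ _
  have h1 := h ε hεpos hε1
  have h2 : x - y ≤ ε * (x - a) := by nlinarith
  have h3 : ε * (x - a) ≤ ε * M := mul_le_mul_of_nonneg_left (le_max_left _ _) hεpos.le
  have h4 : ε ≤ (x - y) / (2 * M) := min_le_right _ _
  have h5 : ε * M ≤ (x - y) / 2 := by
    calc ε * M ≤ (x - y) / (2 * M) * M := mul_le_mul_of_nonneg_right h4 hMpos.le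
      _ = (x - y) / 2 := by field_simp
  linarith

theorem stmt_8 (odag : O) (pref : (O → ℝ) → (O → ℝ) → Prop)
    (u v : (O → ℝ) → Fin 2 → ℝ)
    -- `u` and `v` are linear lexicographic utility functions representing `pref`
    (hulin : ∀ p : O → ℝ, IsLottery p → u p = ∑ o, p o • u (dirac o))
    (hvlin : ∀ p : O → ℝ, IsLottery p → v p = ∑ o, p o • v (dirac o))
    (hurep : ∀ p q : O → ℝ, IsLottery p → IsLottery q →
      (lexGE2 (u p) (u q) ↔ pref p q))
    (hvrep : ∀ p q : O → ℝ, IsLottery p → IsLottery q →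
      (lexGE2 (v p) (v q) ↔ pref p q))
    -- Completeness, Transitivity, Independence on Δ(O)
    (hcomplete : ∀ p q : O → ℝ, IsLottery p → IsLottery q → pref p q ∨ pref q p)
    (htrans : ∀ p q r : O → ℝ, IsLottery p → IsLottery q → IsLottery r →
      pref p q → pref q r → pref p r)
    (hindep : ∀ p q r : O → ℝ, IsLottery p → IsLottery q → IsLottery r →
      ∀ α : ℝ, 0 ≤ α → α < 1 →
        (pref (α • p + (1 - α) • q) (α • p + (1 - α) • r) ↔ pref q r))
    -- Continuity on safe lotteries
    (hcont : ∀ p q r : O → ℝ, SafeLottery pref odag p → SafeLottery pref odag q →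
      SafeLottery pref odag r → pref p q → pref q r →
      ∃ α : ℝ, 0 ≤ α ∧ α ≤ 1 ∧ Indiff pref (α • p + (1 - α) • r) q)
    -- Safety First
    (hsafety : ∀ p q : O → ℝ, SafeLottery pref odag p → SafeLottery pref odag q →
      ∀ ε : ℝ, 0 < ε → ε ≤ 1 → ¬ pref (ε • dirac odag + (1 - ε) • p) q)
    -- Non-triviality: a strict preference between two safe outcomes
    (hnontriv : ∃ o₁ o₂ : O, SafeOutcome pref odag o₁ ∧ SafeOutcome pref odag o₂ ∧
      ¬ Indiff pref (dirac o₁) (dirac o₂)) :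
    ∃ A ∈ LTpos2, ∃ b : Fin 2 → ℝ,
      ∀ p : O → ℝ, IsLottery p → v p = A.mulVec (u p) + b := by
  classical
  obtain ⟨o₁, o₂, h₁, h₂, hnind⟩ := hnontriv
  have hdl : ∀ o : O, IsLottery (dirac o) := dirac_isLottery
  have hrefl : ∀ p, IsLottery p → pref p p := fun p hp => (hcomplete p p hp hp).elim id id
  have hsl : ∀ {o : O}, SafeOutcome pref odag o → SafeLottery pref odag (dirac o) := by
    intro o ho
    refine ⟨hdl o, fun o' ho' => ?_⟩
    by_cases h : o' = o
    · exact absurd (h ▸ ho) ho'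
    · simp [dirac, h]
  -- strictness from ¬ pref
  have hstrictW : ∀ w : (O → ℝ) → Fin 2 → ℝ,
      (∀ p q, IsLottery p → IsLottery q → (lexGE2 (w p) (w q) ↔ pref p q)) →
      ∀ p q, IsLottery p → IsLottery q → ¬ pref p q → lexGT2 (w q) (w p) := by
    intro w hwrep p q hp hq hnp
    have hno : ¬ lexGE2 (w p) (w q) := fun h => hnp ((hwrep p q hp hq).1 h)
    have h2 : lexGE2 (w q) (w p) := (lexGE2_total (w q) (w p)).resolve_right hno
    rcases h2 with h | h
    · exact absurd (Or.inl h.symm) hno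
    · exact h
  -- indifference gives equal utilities
  have hindiffW : ∀ w : (O → ℝ) → Fin 2 → ℝ,
      (∀ p q, IsLottery p → IsLottery q → (lexGE2 (w p) (w q) ↔ pref p q)) →
      ∀ p q, IsLottery p → IsLottery q → Indiff pref p q → w p = w q := by
    intro w hwrep p q hp hq h
    exact lexGE2_antisymm ((hwrep p q hp hq).2 h.1) ((hwrep q p hq hp).2 h.2)
  -- mixtures
  have hmixW : ∀ w : (O → ℝ) → Fin 2 → ℝ,
      (∀ p, IsLottery p → w p = ∑ o, p o • w (dirac o)) →
      ∀ p q, IsLottery p → IsLottery q → ∀ α : ℝ, 0 ≤ α → α ≤ 1 → ∀ i,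
        w (α • p + (1 - α) • q) i = α * w p i + (1 - α) * w q i := by
    intro w hwlin p q hp hq α h0 h1 i
    have hm := mix_isLottery hp hq h0 h1
    rw [hwlin _ hm, hwlin p hp, hwlin q hq]
    simp only [Finset.sum_apply, Pi.add_apply, Pi.smul_apply, smul_eq_mul, Finset.mul_sum]
    rw [← Finset.sum_add_distrib]
    exact Finset.sum_congr rfl fun o _ => by ring
  -- pick a strictly ordered safe pair
  obtain ⟨s₁, s₂, hs₁, hs₂, hp12, hnp21⟩ :
      ∃ s₁ s₂, SafeOutcome pref odag s₁ ∧ SafeOutcome pref odag s₂ ∧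
        pref (dirac s₁) (dirac s₂) ∧ ¬ pref (dirac s₂) (dirac s₁) := by
    rcases hcomplete (dirac o₁) (dirac o₂) (hdl _) (hdl _) with h | h
    · exact ⟨o₁, o₂, h₁, h₂, h, fun h' => hnind ⟨h, h'⟩⟩
    · exact ⟨o₂, o₁, h₂, h₁, h, fun h' => hnind ⟨h', h⟩⟩
  -- master facts per representation
  have masterW : ∀ w : (O → ℝ) → Fin 2 → ℝ,
      (∀ p, IsLottery p → w p = ∑ o, p o • w (dirac o)) →
      (∀ p q, IsLottery p → IsLottery q → (lexGE2 (w p) (w q) ↔ pref p q)) →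
      (∀ o, SafeOutcome pref odag o → w (dirac o) 0 = w (dirac s₁) 0) ∧
      w (dirac odag) 0 < w (dirac s₁) 0 ∧
      w (dirac s₂) 1 < w (dirac s₁) 1 := by
    intro w hwlin hwrep
    have hfle : ∀ o o', SafeOutcome pref odag o → SafeOutcome pref odag o' →
        w (dirac o) 0 ≤ w (dirac o') 0 := by
      intro o o' ho ho'
      apply eps_lemma (a := w (dirac odag) 0)
      intro ε hε0 hε1
      have hns := hsafety (dirac o) (dirac o') (hsl ho) (hsl ho') ε hε0 hε1
      have hmixl := mix_isLottery (hdl odag) (hdl o) hε0.le hε1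
      have hgt := hstrictW w hwrep _ _ hmixl (hdl o') hns
      have hval := hmixW w hwlin (dirac odag) (dirac o) (hdl _) (hdl _) ε hε0.le hε1 0
      rcases hgt with h | ⟨h, _⟩ <;> linarith
    have hfeq : ∀ o, SafeOutcome pref odag o → w (dirac o) 0 = w (dirac s₁) 0 :=
      fun o ho => le_antisymm (hfle o s₁ ho hs₁) (hfle s₁ o hs₁ ho)
    have hGT : lexGT2 (w (dirac s₁)) (w (dirac s₂)) :=
      hstrictW w hwrep _ _ (hdl s₂) (hdl s₁) hnp21
    have h21 : w (dirac s₂) 1 < w (dirac s₁) 1 := by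
      rcases hGT with h | ⟨_, h⟩
      · have := hfeq s₂ hs₂; linarith
      · exact h
    refine ⟨hfeq, ?_, h21⟩
    have hod : ¬ pref (dirac odag) (dirac s₁) := by
      have h := hsafety (dirac s₁) (dirac s₁) (hsl hs₁) (hsl hs₁) 1 one_pos le_rfl
      have he : (1:ℝ) • dirac odag + ((1:ℝ) - 1) • dirac s₁ = dirac odag := by
        funext o; simp
      rwa [he] at h
    have hGT2 : lexGT2 (w (dirac s₁)) (w (dirac odag)) :=
      hstrictW w hwrep _ _ (hdl odag) (hdl s₁) hod
    rcases hGT2 with h | ⟨heq, _⟩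
    · exact h
    exfalso
    have key : w (dirac s₁) 1 ≤ w (dirac s₂) 1 := by
      apply eps_lemma (a := w (dirac odag) 1)
      intro ε hε0 hε1
      have hns := hsafety (dirac s₁) (dirac s₂) (hsl hs₁) (hsl hs₂) ε hε0 hε1
      have hmixl := mix_isLottery (hdl odag) (hdl s₁) hε0.le hε1
      have hgt := hstrictW w hwrep _ _ hmixl (hdl s₂) hns
      have hval0 := hmixW w hwlin (dirac odag) (dirac s₁) (hdl _) (hdl _) ε hε0.le hε1 0
      have hval1 := hmixW w hwlin (dirac odag) (dirac s₁) (hdl _) (hdl _) ε hε0.le hε1 1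
      have hc2 := hfeq s₂ hs₂
      rcases hgt with h' | ⟨_, h'⟩
      · exfalso
        rw [hval0, ← heq] at h'
        nlinarith
      · linarith
    linarith
  obtain ⟨hufeq, hualt, hu21⟩ := masterW u hulin hurep
  obtain ⟨hvfeq, hvalt, hv21⟩ := masterW v hvlin hvrep
  -- constants
  set a1 := u (dirac odag) 0 with ha1def
  set a2 := u (dirac odag) 1 with ha2def
  set c1 := u (dirac s₁) 0 with hc1def
  set u1 := u (dirac s₁) 1 with hu1def
  set u2 := u (dirac s₂) 1 with hu2def
  set va1 := v (dirac odag) 0 with hva1def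
  set va2 := v (dirac odag) 1 with hva2def
  set d1 := v (dirac s₁) 0 with hd1def
  set v1 := v (dirac s₁) 1 with hv1def
  set v2 := v (dirac s₂) 1 with hv2def
  have hduz : u1 - u2 ≠ 0 := by intro h; rw [sub_eq_zero] at h; exact absurd h (by linarith)
  set A11 := (v1 - v2) / (u1 - u2) with hA11def
  have hA11pos : 0 < A11 := div_pos (by linarith) (by linarith)
  have hA : A11 * (u1 - u2) = v1 - v2 := div_mul_cancel₀ _ hduz
  -- vNM uniqueness on second coordinate for safe outcomes
  have key2 : ∀ o, SafeOutcome pref odag o →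
      v (dirac o) 1 = A11 * u (dirac o) 1 + (v1 - A11 * u1) := by
    intro o ho
    by_cases hA1 : pref (dirac s₁) (dirac o)
    · by_cases hA2 : pref (dirac o) (dirac s₂)
      · obtain ⟨α, hα0, hα1, hind⟩ := hcont (dirac s₁) (dirac o) (dirac s₂)
          (hsl hs₁) (hsl ho) (hsl hs₂) hA1 hA2
        have hmixl := mix_isLottery (hdl s₁) (hdl s₂) hα0 hα1
        have hequ := hindiffW u hurep _ _ hmixl (hdl o) hind
        have heqv := hindiffW v hvrep _ _ hmixl (hdl o) hind
        have hu' : α * u1 + (1 - α) * u2 = u (dirac o) 1 := by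
          have h := hmixW u hulin (dirac s₁) (dirac s₂) (hdl _) (hdl _) α hα0 hα1 1
          rw [← h]; exact congrFun hequ 1
        have hv' : α * v1 + (1 - α) * v2 = v (dirac o) 1 := by
          have h := hmixW v hvlin (dirac s₁) (dirac s₂) (hdl _) (hdl _) α hα0 hα1 1
          rw [← h]; exact congrFun heqv 1
        linear_combination -hv' + A11 * hu' + (1 - α) * hA
      · have ho2 : pref (dirac s₂) (dirac o) :=
          (hcomplete (dirac o) (dirac s₂) (hdl o) (hdl s₂)).resolve_left hA2
        obtain ⟨α, hα0, hα1, hind⟩ := hcont (dirac s₁) (dirac s₂) (dirac o)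
          (hsl hs₁) (hsl hs₂) (hsl ho) hp12 ho2
        have hmixl := mix_isLottery (hdl s₁) (hdl o) hα0 hα1
        have hequ := hindiffW u hurep _ _ hmixl (hdl s₂) hind
        have heqv := hindiffW v hvrep _ _ hmixl (hdl s₂) hind
        have hu' : α * u1 + (1 - α) * u (dirac o) 1 = u2 := by
          have h := hmixW u hulin (dirac s₁) (dirac o) (hdl _) (hdl _) α hα0 hα1 1
          rw [← h]; exact congrFun hequ 1
        have hv' : α * v1 + (1 - α) * v (dirac o) 1 = v2 := by
          have h := hmixW v hvlin (dirac s₁) (dirac o) (hdl _) (hdl _) α hα0 hα1 1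
          rw [← h]; exact congrFun heqv 1
        have hαne : (1:ℝ) - α ≠ 0 := by
          intro h
          have : α = 1 := by linarith
          rw [this] at hu'
          apply hduz
          rw [sub_eq_zero]
          linarith
        apply mul_left_cancel₀ hαne
        linear_combination hv' - A11 * hu' + hA
    · have ho1 : pref (dirac o) (dirac s₁) :=
        (hcomplete (dirac s₁) (dirac o) (hdl s₁) (hdl o)).resolve_left hA1
      obtain ⟨α, hα0, hα1, hind⟩ := hcont (dirac o) (dirac s₁) (dirac s₂)
        (hsl ho) (hsl hs₁) (hsl hs₂) ho1 hp12
      have hmixl := mix_isLottery (hdl o) (hdl s₂) hα0 hα1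
      have hequ := hindiffW u hurep _ _ hmixl (hdl s₁) hind
      have heqv := hindiffW v hvrep _ _ hmixl (hdl s₁) hind
      have hu' : α * u (dirac o) 1 + (1 - α) * u2 = u1 := by
        have h := hmixW u hulin (dirac o) (dirac s₂) (hdl _) (hdl _) α hα0 hα1 1
        rw [← h]; exact congrFun hequ 1
      have hv' : α * v (dirac o) 1 + (1 - α) * v2 = v1 := by
        have h := hmixW v hvlin (dirac o) (dirac s₂) (hdl _) (hdl _) α hα0 hα1 1
        rw [← h]; exact congrFun heqv 1
      have hαne : α ≠ 0 := by
        intro h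
        rw [h] at hu'
        apply hduz
        rw [sub_eq_zero]
        linarith
      apply mul_left_cancel₀ hαne
      linear_combination hv' - A11 * hu' + (α - 1) * hA
  -- remaining constants
  have hca : c1 - a1 ≠ 0 := by intro h; rw [sub_eq_zero] at h; exact absurd h.symm (ne_of_lt hualt)
  set A00 := (d1 - va1) / (c1 - a1) with hA00def
  have hA00pos : 0 < A00 := div_pos (by linarith) (by linarith)
  set A10 := ((v1 - A11 * u1) + A11 * a2 - va2) / (c1 - a1) with hA10def
  set b0 := d1 - A00 * c1 with hb0def
  set bb1 := (v1 - A11 * u1) - A10 * c1 with hbb1def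
  have hA00 : A00 * (c1 - a1) = d1 - va1 := div_mul_cancel₀ _ hca
  have hA10 : A10 * (c1 - a1) = (v1 - A11 * u1) + A11 * a2 - va2 := div_mul_cancel₀ _ hca
  have hunsafe : ∀ o, ¬ SafeOutcome pref odag o →
      u (dirac o) = u (dirac odag) ∧ v (dirac o) = v (dirac odag) := by
    intro o ho
    have hind : Indiff pref (dirac o) (dirac odag) := not_not.mp ho
    exact ⟨hindiffW u hurep _ _ (hdl o) (hdl odag) hind,
      hindiffW v hvrep _ _ (hdl o) (hdl odag) hind⟩
  have key0 : ∀ o, v (dirac o) 0 = A00 * u (dirac o) 0 + b0 := by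
    intro o
    by_cases ho : SafeOutcome pref odag o
    · rw [hufeq o ho, hvfeq o ho]
      rw [hb0def]; ring
    · obtain ⟨heu, hev⟩ := hunsafe o ho
      rw [heu, hev]
      rw [hb0def]
      linarith [hA00]
  have key1 : ∀ o, v (dirac o) 1 = A10 * u (dirac o) 0 + A11 * u (dirac o) 1 + bb1 := by
    intro o
    by_cases ho : SafeOutcome pref odag o
    · rw [hufeq o ho, key2 o ho, hbb1def]
      ring
    · obtain ⟨heu, hev⟩ := hunsafe o ho
      rw [heu, hev, hbb1def]
      linarith [hA10]
  -- assemble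
  refine ⟨!![A00, 0; A10, A11], ⟨?_, ?_⟩, ![b0, bb1], ?_⟩
  · intro i j hij
    fin_cases i <;> fin_cases j
    · exact absurd hij (lt_irrefl _)
    · simp
    · exact absurd hij (by decide)
    · exact absurd hij (lt_irrefl _)
  · intro i
    fin_cases i
    · simpa using hA00pos
    · simpa using hA11pos
  · intro p hp
    have hsumu : ∀ j : Fin 2, u p j = ∑ o, p o * u (dirac o) j := by
      intro j; rw [hulin p hp]; simp [Finset.sum_apply]
    have hsumv : ∀ j : Fin 2, v p j = ∑ o, p o * v (dirac o) j := by
      intro j; rw [hvlin p hp]; simp [Finset.sum_apply]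
    funext i
    simp only [Pi.add_apply, Matrix.mulVec, dotProduct, Fin.sum_univ_two]
    fin_cases i
    · simp only [Fin.zero_eta, Fin.mk_one, Matrix.cons_val', Matrix.cons_val_zero,
        Matrix.empty_val', Matrix.cons_val_fin_one, Matrix.cons_val_one, Matrix.head_cons,
        Matrix.head_fin_const]
      rw [hsumv 0, hsumu 0, hsumu 1]
      calc (∑ o, p o * v (dirac o) 0)
          = ∑ o, (A00 * (p o * u (dirac o) 0) + 0 * (p o * u (dirac o) 1) + p o * b0) := by
            refine Finset.sum_congr rfl fun o _ => ?_
            rw [key0 o]; ring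
        _ = A00 * (∑ o, p o * u (dirac o) 0) + 0 * (∑ o, p o * u (dirac o) 1)
              + (∑ o, p o) * b0 := by
            rw [Finset.sum_add_distrib, Finset.sum_add_distrib, ← Finset.mul_sum,
              ← Finset.mul_sum, ← Finset.sum_mul]
        _ = A00 * (∑ o, p o * u (dirac o) 0) + 0 * (∑ o, p o * u (dirac o) 1) + b0 := by
            rw [hp.2]; ring
    · simp only [Fin.zero_eta, Fin.mk_one, Matrix.cons_val', Matrix.cons_val_zero,
        Matrix.empty_val', Matrix.cons_val_fin_one, Matrix.cons_val_one, Matrix.head_cons,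
        Matrix.head_fin_const]
      rw [hsumv 1, hsumu 0, hsumu 1]
      calc (∑ o, p o * v (dirac o) 1)
          = ∑ o, (A10 * (p o * u (dirac o) 0) + A11 * (p o * u (dirac o) 1) + p o * bb1) := by
            refine Finset.sum_congr rfl fun o _ => ?_
            rw [key1 o]; ring
        _ = A10 * (∑ o, p o * u (dirac o) 0) + A11 * (∑ o, p o * u (dirac o) 1)
              + (∑ o, p o) * bb1 := by
            rw [Finset.sum_add_distrib, Finset.sum_add_distrib, ← Finset.mul_sum,
              ← Finset.mul_sum, ← Finset.sum_mul]
        _ = A10 * (∑ o, p o * u (dirac o) 0) + A11 * (∑ o, p o * u (dirac o) 1) + bb1 := by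
            rw [hp.2]; ring
end

section
/- In a finite lexicographic MDP (rewards in R^d, transition-dependent multipliers Γ(e) in LT+(d) with all diagonal entries strictly less than 1), there exists a stationary deterministic policy π such that Q^π(s,a) ≥_lex Q^{π'}(s,a) for every policy π' and every state-action pair (s,a). -/
/-- Strict lexicographic order on `ℝ^d`. -/
def lexGT {d : ℕ} (u v : Fin d → ℝ) : Prop :=
  ∃ k : Fin d, (∀ i : Fin d, i < k → u i = v i) ∧ v k < u k

/-- Weak lexicographic order on `ℝ^d`. -/
def lexGE {d : ℕ} (u v : Fin d → ℝ) : Prop := u = v ∨ lexGT u v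

/-- `LT⁺(d)`: lower triangular matrices with strictly positive diagonal. -/
def LTpos (d : ℕ) : Set (Matrix (Fin d) (Fin d) ℝ) :=
  {A | (∀ i j : Fin d, i < j → A i j = 0) ∧ ∀ i : Fin d, 0 < A i i}

lemma lexGT_iff {d : ℕ} {u v : Fin d → ℝ} : lexGT u v ↔ toLex v < toLex u := by
  constructor
  · rintro ⟨k, h, hk⟩; exact ⟨k, fun j hj => (h j hj).symm, hk⟩
  · rintro ⟨k, h, hk⟩; exact ⟨k, fun j hj => (h j hj).symm, hk⟩

lemma lexGE_iff {d : ℕ} {u v : Fin d → ℝ} : lexGE u v ↔ toLex v ≤ toLex u := by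
  rw [le_iff_lt_or_eq, lexGE, lexGT_iff]
  constructor
  · rintro (rfl | h); exacts [Or.inr rfl, Or.inl h]
  · rintro (h | h)
    · exact Or.inr h
    · exact Or.inl (toLex.injective h).symm

lemma lexGE_refl {d : ℕ} (u : Fin d → ℝ) : lexGE u u := Or.inl rfl

lemma lexGE_sub_iff {d : ℕ} {u v : Fin d → ℝ} : lexGE (u - v) 0 ↔ lexGE u v := by
  constructor
  · rintro (h | ⟨k, h, hk⟩)
    · exact Or.inl (sub_eq_zero.mp h)
    · refine Or.inr ⟨k, fun i hi => sub_eq_zero.mp ?_, ?_⟩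
      · simpa using h i hi
      · simp only [Pi.zero_apply, Pi.sub_apply] at hk; linarith
  · rintro (h | ⟨k, h, hk⟩)
    · exact Or.inl (by rw [h, sub_self])
    · refine Or.inr ⟨k, fun i hi => ?_, ?_⟩
      · simp [Pi.sub_apply, h i hi]
      · simp only [Pi.zero_apply, Pi.sub_apply]; linarith

lemma lexGE_add_of_ge_zero {d : ℕ} {w : Fin d → ℝ} (u : Fin d → ℝ) (hw : lexGE w 0) :
    lexGE (u + w) u := by
  rcases hw with h | ⟨k, h, hk⟩
  · rw [h, add_zero]; exact lexGE_refl u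
  · refine Or.inr ⟨k, fun i hi => ?_, ?_⟩
    · have := h i hi; simp only [Pi.zero_apply] at this; simp [this]
    · simp only [Pi.zero_apply] at hk; simp only [Pi.add_apply]; linarith

lemma lexGE_add {d : ℕ} {u w : Fin d → ℝ} (hu : lexGE u 0) (hw : lexGE w 0) :
    lexGE (u + w) 0 := by
  rw [lexGE_iff] at hu ⊢
  calc (toLex (0 : Fin d → ℝ)) ≤ toLex u := hu
    _ ≤ toLex (u + w) := lexGE_iff.mp (lexGE_add_of_ge_zero u hw)

lemma lexGT_add {d : ℕ} {u w : Fin d → ℝ} (hu : lexGT u 0) (hw : lexGE w 0) :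
    lexGT (u + w) 0 := by
  rw [lexGT_iff] at hu ⊢
  exact lt_of_lt_of_le hu (lexGE_iff.mp (lexGE_add_of_ge_zero u hw))

lemma lexGE_smul {d : ℕ} {u : Fin d → ℝ} {p : ℝ} (hp : 0 ≤ p) (hu : lexGE u 0) :
    lexGE (p • u) 0 := by
  rcases hu with h | ⟨k, h, hk⟩
  · rw [h, smul_zero]; exact lexGE_refl 0
  · rcases eq_or_lt_of_le hp with rfl | hp
    · left; rw [zero_smul]
    · refine Or.inr ⟨k, fun i hi => ?_, ?_⟩
      · have := h i hi; simp only [Pi.zero_apply] at this; simp [this]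
      · simp only [Pi.zero_apply] at hk ⊢; simp only [Pi.smul_apply, smul_eq_mul]
        positivity

lemma lexGE_sum {d : ℕ} {ι : Type*} (s : Finset ι) (f : ι → Fin d → ℝ)
    (h : ∀ i ∈ s, lexGE (f i) 0) : lexGE (∑ i ∈ s, f i) 0 := by
  classical
  induction s using Finset.induction_on with
  | empty => simpa using lexGE_refl (0 : Fin d → ℝ)
  | insert _ _ hni ih =>
    rw [Finset.sum_insert hni]
    exact lexGE_add (h _ (Finset.mem_insert_self _ _))
      (ih fun i hi => h i (Finset.mem_insert_of_mem hi))

lemma mulVec_apply' {d : ℕ} (G : Matrix (Fin d) (Fin d) ℝ) (u : Fin d → ℝ) (i : Fin d) :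
    G.mulVec u i = ∑ j, G i j * u j := rfl

lemma lexGE_mulVec {d : ℕ} {G : Matrix (Fin d) (Fin d) ℝ} (hG : G ∈ LTpos d ∨ G = 0)
    {u : Fin d → ℝ} (hu : lexGE u 0) : lexGE (G.mulVec u) 0 := by
  rcases hG with ⟨hlow, hdiag⟩ | rfl
  · rcases hu with h | ⟨k, h, hk⟩
    · rw [h, Matrix.mulVec_zero]; exact lexGE_refl 0
    · simp only [Pi.zero_apply] at hk
      refine Or.inr ⟨k, fun i hi => ?_, ?_⟩
      · rw [mulVec_apply', Pi.zero_apply]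
        refine Finset.sum_eq_zero fun j _ => ?_
        rcases lt_or_ge i j with hij | hij
        · rw [hlow i j hij, zero_mul]
        · have : u j = 0 := by
            have := h j (lt_of_le_of_lt hij hi); simpa using this
          rw [this, mul_zero]
      · rw [Pi.zero_apply, mulVec_apply']
        have : ∑ j, G k j * u j = G k k * u k := by
          refine Finset.sum_eq_single k (fun j _ hj => ?_) (by simp)
          rcases lt_or_ge k j with hij | hij
          · rw [hlow k j hij, zero_mul]
          · have : u j = 0 := by
              have := h j (lt_of_le_of_ne hij hj); simpa using this
            rw [this, mul_zero]
        rw [this]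
        exact mul_pos (hdiag k) hk
  · rw [Matrix.zero_mulVec]; exact lexGE_refl 0

lemma lexGT_sub_iff {d : ℕ} {u v : Fin d → ℝ} : lexGT (u - v) 0 ↔ lexGT u v := by
  constructor
  · rintro ⟨k, h, hk⟩
    refine ⟨k, fun i hi => sub_eq_zero.mp (by simpa using h i hi), ?_⟩
    simp only [Pi.zero_apply, Pi.sub_apply] at hk; linarith
  · rintro ⟨k, h, hk⟩
    refine ⟨k, fun i hi => by simp [h i hi], ?_⟩
    simp only [Pi.zero_apply, Pi.sub_apply]; linarith


lemma lexGE_total {d : ℕ} (u v : Fin d → ℝ) : lexGE u v ∨ lexGT v u := by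
  have h : ∀ a b : Lex (Fin d → ℝ), a < b ∨ a = b ∨ b < a :=
    fun a b => lt_trichotomy a b
  rcases h (toLex v) (toLex u) with h' | h' | h'
  · exact Or.inl (Or.inr (lexGT_iff.mpr h'))
  · exact Or.inl (Or.inl (toLex.injective h').symm)
  · exact Or.inr (lexGT_iff.mpr h')

/-- Core fixed-point lemma: a lex-nonnegative "Bellman residual" forces a
lex-nonnegative solution, thanks to the sub-unit diagonal contraction. -/
lemma lemA {S : Type*} [Fintype S] {d : ℕ}
    (p : S → S → ℝ) (hp0 : ∀ s s', 0 ≤ p s s') (hp1 : ∀ s, ∑ s', p s s' ≤ 1)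
    (G : S → S → Matrix (Fin d) (Fin d) ℝ)
    (hG : ∀ s s', G s s' ∈ LTpos d ∨ G s s' = 0)
    (γ : ℝ) (hγ0 : 0 ≤ γ) (hγ1 : γ < 1)
    (hGd : ∀ s s' i, G s s' i i ≤ γ)
    (c x : S → Fin d → ℝ)
    (hc : ∀ s, lexGE (c s) 0)
    (hx : ∀ s, x s = c s + ∑ s', p s s' • (G s s').mulVec (x s')) :
    ∀ s, lexGE (x s) 0 := by
  classical
  -- coordinate-wise equation
  have hxi : ∀ s (i : Fin d), x s i = c s i + ∑ s', p s s' * ((G s s').mulVec (x s')) i := by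
    intro s i
    conv_lhs => rw [hx s]
    simp [Finset.sum_apply]
  have main : ∀ k : ℕ, ∀ s, (∀ i : Fin d, (i : ℕ) < k → x s i = 0) ∨ lexGT (x s) 0 := by
    intro k
    induction k with
    | zero => intro s; exact Or.inl (fun i hi => absurd hi (by omega))
    | succ k ih =>
      -- claim1 : for flat states, c vanishes below k and successors are flat below k
      have claim1 : ∀ n : ℕ, ∀ t, (∀ j : Fin d, (j : ℕ) < k → x t j = 0) →
          ∀ i : Fin d, (i : ℕ) = n → (i : ℕ) < k →
          c t i = 0 ∧ ∀ s', p t s' ≠ 0 → G t s' ≠ 0 → x s' i = 0 := by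
        intro n
        induction n using Nat.strong_induction_on with
        | _ n IH =>
          intro t hflat i hin hik
          subst hin
          -- previous coordinates of contributing successors vanish
          have hprev : ∀ s', p t s' ≠ 0 → G t s' ≠ 0 →
              ∀ j : Fin d, j < i → x s' j = 0 := by
            intro s' hps hGs j hji
            exact ((IH j (by exact_mod_cast hji) t hflat j rfl
              (lt_trans (by exact_mod_cast hji) hik)).2) s' hps hGs
          -- each term in the coordinate-i equation is nonnegative
          have hterm : ∀ s', 0 ≤ p t s' * ((G t s').mulVec (x s')) i := by
            intro s'
            rcases eq_or_ne (p t s') 0 with hps | hps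
            · rw [hps, zero_mul]
            rcases eq_or_ne (G t s') 0 with hGs | hGs
            · rw [hGs, Matrix.zero_mulVec, Pi.zero_apply, mul_zero]
            rcases (hG t s').resolve_right hGs with ⟨hlow, hdiag⟩
            have hxi' : 0 ≤ x s' i := by
              rcases ih s' with hf | ⟨k₀, h0, hk0⟩
              · rw [hf i hik]
              · simp only [Pi.zero_apply] at hk0
                rcases lt_trichotomy k₀ i with h | h | h
                · exact absurd (hprev s' hps hGs k₀ h) (ne_of_gt hk0)
                · subst h; exact le_of_lt hk0
                · have := h0 i h; simp only [Pi.zero_apply] at this; rw [this]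
            have hmv : ((G t s').mulVec (x s')) i = G t s' i i * x s' i := by
              rw [mulVec_apply']
              refine Finset.sum_eq_single i (fun j _ hj => ?_) (by simp)
              rcases lt_or_ge i j with hij | hij
              · rw [hlow i j hij, zero_mul]
              · rw [hprev s' hps hGs j (lt_of_le_of_ne hij hj), mul_zero]
            rw [hmv]
            have := hdiag i
            have := (hp0 t s').lt_of_ne' hps
            positivity
          have hci : 0 ≤ c t i := by
            rcases hc t with h | ⟨k₀, h0, hk0⟩
            · rw [h, Pi.zero_apply]
            · simp only [Pi.zero_apply] at hk0
              rcases lt_trichotomy k₀ i with h | h | h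
              · have := (IH k₀ (by exact_mod_cast h) t hflat k₀ rfl
                  (lt_trans (by exact_mod_cast h) hik)).1
                exact absurd this (ne_of_gt hk0)
              · subst h; exact le_of_lt hk0
              · have := h0 i h; simp only [Pi.zero_apply] at this; rw [this]
          -- the coordinate-i equation sums nonnegatives to zero
          have heq : 0 = c t i + ∑ s', p t s' * ((G t s').mulVec (x s')) i := by
            rw [← hxi t i, hflat i hik]
          have hsum0 : ∑ s', p t s' * ((G t s').mulVec (x s')) i = 0 := by
            have h1 : 0 ≤ ∑ s', p t s' * ((G t s').mulVec (x s')) i :=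
              Finset.sum_nonneg fun s' _ => hterm s'
            linarith
          have hceq : c t i = 0 := by linarith
          refine ⟨hceq, fun s' hps hGs => ?_⟩
          have := (Finset.sum_eq_zero_iff_of_nonneg
            (fun s' _ => hterm s')).mp hsum0 s' (Finset.mem_univ s')
          rcases (hG t s').resolve_right hGs with ⟨hlow, hdiag⟩
          have hmv : ((G t s').mulVec (x s')) i = G t s' i i * x s' i := by
            rw [mulVec_apply']
            refine Finset.sum_eq_single i (fun j _ hj => ?_) (by simp)
            rcases lt_or_ge i j with hij | hij
            · rw [hlow i j hij, zero_mul]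
            · rw [hprev s' hps hGs j (lt_of_le_of_ne hij hj), mul_zero]
          rw [hmv] at this
          have hp' : 0 < p t s' := (hp0 t s').lt_of_ne' hps
          have hd' : 0 < G t s' i i := hdiag i
          rcases mul_eq_zero.mp this with h | h
          · exact absurd h (ne_of_gt hp')
          · rcases mul_eq_zero.mp h with h' | h'
            · exact absurd h' (ne_of_gt hd')
            · exact h'
      intro s
      rcases ih s with hflat | hgt
      · by_cases hkd : k < d
        · set K : Fin d := ⟨k, hkd⟩ with hK
          -- all flat states have nonnegative k-th coordinate
          have hnonneg : ∀ t, (∀ j : Fin d, (j : ℕ) < k → x t j = 0) → 0 ≤ x t K := by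
            by_contra hcon
            push_neg at hcon
            set B : Finset S := Finset.univ.filter
              (fun t => (∀ j : Fin d, (j : ℕ) < k → x t j = 0) ∧ x t K < 0) with hB
            have hBne : B.Nonempty := by
              obtain ⟨t, hf, hneg⟩ := hcon
              refine ⟨t, ?_⟩
              simp only [hB, Finset.mem_filter, Finset.mem_univ, true_and]
              exact ⟨hf, hneg⟩
            obtain ⟨t, htB, htmin⟩ := B.exists_min_image (fun t => x t K) hBne
            simp only [hB, Finset.mem_filter, Finset.mem_univ, true_and] at htB
            obtain ⟨htflat, htneg⟩ := htB
            set m : ℝ := x t K with hm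
            have hγm : γ * m ≤ 0 := mul_nonpos_of_nonneg_of_nonpos hγ0 (le_of_lt htneg)
            -- c t K ≥ 0
            have hcK : 0 ≤ c t K := by
              rcases hc t with h | ⟨k₀, h0, hk0⟩
              · rw [h, Pi.zero_apply]
              · simp only [Pi.zero_apply] at hk0
                rcases lt_trichotomy k₀ K with h | h | h
                · have hk0k : (k₀ : ℕ) < k := h
                  have := (claim1 k₀ t htflat k₀ rfl hk0k).1
                  exact absurd this (ne_of_gt hk0)
                · subst h; exact le_of_lt hk0
                · have := h0 K h; simp only [Pi.zero_apply] at this; rw [this]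
            -- each term is at least p * (γ m)
            have hterm : ∀ s', p t s' * (γ * m) ≤ p t s' * ((G t s').mulVec (x s')) K := by
              intro s'
              rcases eq_or_ne (p t s') 0 with hps | hps
              · simp [hps]
              have hp' : 0 < p t s' := (hp0 t s').lt_of_ne' hps
              refine mul_le_mul_of_nonneg_left ?_ (le_of_lt hp')
              rcases eq_or_ne (G t s') 0 with hGs | hGs
              · rw [hGs, Matrix.zero_mulVec, Pi.zero_apply]; exact hγm
              rcases (hG t s').resolve_right hGs with ⟨hlow, hdiag⟩
              have hflat' : ∀ j : Fin d, (j : ℕ) < k → x s' j = 0 := by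
                intro j hj
                exact (claim1 j t htflat j rfl hj).2 s' hps hGs
              have hmv : ((G t s').mulVec (x s')) K = G t s' K K * x s' K := by
                rw [mulVec_apply']
                refine Finset.sum_eq_single K (fun j _ hj => ?_) (by simp)
                rcases lt_or_ge K j with hij | hij
                · rw [hlow K j hij, zero_mul]
                · have hjK : j < K := lt_of_le_of_ne hij hj
                  rw [hflat' j (Fin.lt_def.mp hjK), mul_zero]
              rw [hmv]
              rcases lt_or_ge (x s' K) 0 with hneg | hpos
              · have hs'B : s' ∈ B := by
                  simp only [hB, Finset.mem_filter, Finset.mem_univ, true_and]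
                  exact ⟨hflat', hneg⟩
                have hms' : m ≤ x s' K := htmin s' hs'B
                calc γ * m ≤ G t s' K K * m := by
                      nlinarith [hGd t s' K, le_of_lt htneg]
                  _ ≤ G t s' K K * x s' K := by nlinarith [hdiag K]
              · nlinarith [hdiag K]
            have hkey : γ * m ≤ x t K := by
              have h1 : ∑ s', p t s' * (γ * m) ≤
                  ∑ s', p t s' * ((G t s').mulVec (x s')) K :=
                Finset.sum_le_sum (fun s' _ => hterm s')
              have h2 : ∑ s', p t s' * (γ * m) = (∑ s', p t s') * (γ * m) := by
                rw [Finset.sum_mul]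
              have h3 : γ * m ≤ (∑ s', p t s') * (γ * m) := by
                nlinarith [hp1 t, Finset.sum_nonneg (fun s' (_ : s' ∈ (Finset.univ : Finset S)) => hp0 t s')]
              calc γ * m ≤ ∑ s', p t s' * (γ * m) := by rw [h2]; exact h3
                _ ≤ ∑ s', p t s' * ((G t s').mulVec (x s')) K := h1
                _ ≤ c t K + ∑ s', p t s' * ((G t s').mulVec (x s')) K := by linarith
                _ = x t K := (hxi t K).symm
            -- contradiction: m ≥ γ m with m < 0, γ < 1
            rw [← hm] at hkey
            nlinarith
          have h0 := hnonneg s hflat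
          rcases eq_or_lt_of_le h0 with heq | hlt
          · left
            intro i hi
            rcases lt_or_eq_of_le (Nat.lt_succ_iff.mp hi) with h | h
            · exact hflat i h
            · have : i = K := Fin.ext h
              rw [this, ← heq]
          · right
            refine ⟨K, fun i hi => ?_, by simpa using hlt⟩
            have : (i : ℕ) < k := hi
            simp [hflat i this]
        · left
          intro i _
          exact hflat i (lt_of_lt_of_le i.isLt (le_of_not_gt hkd))
      · exact Or.inr hgt
  intro s
  rcases main d s with hflat | hgt
  · left
    funext i
    simp [hflat i i.isLt]
  · exact Or.inr hgt


/-- In a finite lexicographic MDP (vector rewards, transition-dependent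
multipliers in `LT⁺(d) ∪ {0}` with diagonal entries `< 1`), there is a
stationary deterministic policy whose `Q`-function lexicographically dominates
that of every policy at every state-action pair. -/
theorem stmt_14 {S A : Type*} [Fintype S] [Fintype A] [Nonempty S] [Nonempty A]
    (d : ℕ)
    (P : S → A → S → ℝ)
    (hP : ∀ s a, (∀ s', 0 ≤ P s a s') ∧ ∑ s', P s a s' = 1)
    -- each transition (s, a, s') emits an event with vector reward `r s a s'`
    -- and multiplier matrix `Γ s a s'`
    (r : S → A → S → Fin d → ℝ)
    (Γ : S → A → S → Matrix (Fin d) (Fin d) ℝ)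
    (hΓ : ∀ s a s', Γ s a s' ∈ LTpos d ∨ Γ s a s' = 0)
    (hΓdiag : ∀ s a s' i, Γ s a s' i i < 1)
    -- `Q π` is the expected lexicographic return of policy `π`, characterized
    -- by the Bellman recursion
    (Q : (S → A) → S → A → Fin d → ℝ)
    (hQ : ∀ (π : S → A) (s : S) (a : A),
      Q π s a = ∑ s', P s a s' • (r s a s' + (Γ s a s').mulVec (Q π s' (π s')))) :
    ∃ π : S → A, ∀ (π' : S → A) (s : S) (a : A),
      lexGE (Q π s a) (Q π' s a) := by
  classical
  -- a uniform bound `γ < 1` on all diagonal entries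
  obtain ⟨γ, hγ0, hγ1, hGd⟩ : ∃ γ : ℝ, 0 ≤ γ ∧ γ < 1 ∧ ∀ s a s' i, Γ s a s' i i ≤ γ := by
    set T : Finset ℝ :=
      insert 0 ((Finset.univ : Finset (S × A × S × Fin d)).image
        (fun q => Γ q.1 q.2.1 q.2.2.1 q.2.2.2 q.2.2.2)) with hT
    have hTne : T.Nonempty := ⟨0, Finset.mem_insert_self _ _⟩
    refine ⟨T.max' hTne, Finset.le_max' T 0 (Finset.mem_insert_self _ _), ?_, ?_⟩
    · rw [Finset.max'_lt_iff]
      intro y hy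
      rw [hT, Finset.mem_insert] at hy
      rcases hy with rfl | hy
      · norm_num
      · obtain ⟨q, -, rfl⟩ := Finset.mem_image.mp hy
        exact hΓdiag _ _ _ _
    · intro s a s' i
      refine Finset.le_max' T _ ?_
      rw [hT, Finset.mem_insert]
      exact Or.inr (Finset.mem_image.mpr ⟨⟨s, a, s', i⟩, Finset.mem_univ _, rfl⟩)
  -- Bellman difference algebra
  have halg : ∀ (π₁ π₂ : S → A) (s : S) (a : A),
      Q π₁ s a = Q π₂ s a + ∑ s', P s a s' •
        (Γ s a s').mulVec (Q π₁ s' (π₁ s') - Q π₂ s' (π₂ s')) := by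
    intro π₁ π₂ s a
    rw [hQ π₁ s a, hQ π₂ s a, ← Finset.sum_add_distrib]
    refine Finset.sum_congr rfl fun s' _ => ?_
    rw [← smul_add, Matrix.mulVec_sub]
    congr 1
    abel
  -- value dominance propagates to Q-dominance
  have hdiff : ∀ (π₁ π₂ : S → A),
      (∀ s', lexGE (Q π₁ s' (π₁ s')) (Q π₂ s' (π₂ s'))) →
      ∀ s a, lexGE (Q π₁ s a) (Q π₂ s a) := by
    intro π₁ π₂ h s a
    have hsum : lexGE (∑ s', P s a s' •
        (Γ s a s').mulVec (Q π₁ s' (π₁ s') - Q π₂ s' (π₂ s'))) 0 :=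
      lexGE_sum _ _ fun s' _ => lexGE_smul ((hP s a).1 s')
        (lexGE_mulVec (hΓ s a s') (lexGE_sub_iff.mpr (h s')))
    rw [halg π₁ π₂ s a]
    exact lexGE_add_of_ge_zero _ hsum
  -- choose a policy whose value vector is maximal (finitely many policies)
  set W : (S → A) → S → Lex (Fin d → ℝ) := fun π s => toLex (Q π s (π s)) with hW
  obtain ⟨π, -, hπmax⟩ := Set.Finite.exists_maximalFor W Set.univ Set.finite_univ
    ⟨Classical.ofNonempty, Set.mem_univ _⟩
  refine ⟨π, ?_⟩
  -- optimality of π at its own Bellman equation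
  have hopt : ∀ (s : S) (a : A), lexGE (Q π s (π s)) (Q π s a) := by
    by_contra hcon
    push_neg at hcon
    obtain ⟨s, a, hlt0⟩ := hcon
    have hlt : lexGT (Q π s a) (Q π s (π s)) :=
      (lexGE_total (Q π s (π s)) (Q π s a)).resolve_left hlt0
    set π'' : S → A := Function.update π s a with hπ''
    have hstep : ∀ t, lexGE (Q π t (π'' t)) (Q π t (π t)) := by
      intro t
      by_cases ht : t = s
      · subst ht
        rw [hπ'', Function.update_self]
        exact Or.inr hlt
      · rw [hπ'', Function.update_of_ne ht]
        exact lexGE_refl _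
    set c : S → Fin d → ℝ := fun t => Q π t (π'' t) - Q π t (π t) with hc
    set x : S → Fin d → ℝ := fun t => Q π'' t (π'' t) - Q π t (π t) with hx
    have hxeq : ∀ t, x t = c t + ∑ s', P t (π'' t) s' •
        (Γ t (π'' t) s').mulVec (x s') := by
      intro t
      have h1 := halg π'' π t (π'' t)
      rw [hx, hc]
      simp only []
      rw [h1]
      abel
    have hge : ∀ t, lexGE (x t) 0 :=
      lemA (fun t s' => P t (π'' t) s') (fun t s' => (hP t (π'' t)).1 s')
        (fun t => le_of_eq (hP t (π'' t)).2)
        (fun t s' => Γ t (π'' t) s') (fun t s' => hΓ t (π'' t) s')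
        γ hγ0 hγ1 (fun t s' i => hGd t (π'' t) s' i)
        c x (fun t => lexGE_sub_iff.mpr (hstep t)) hxeq
    -- strict improvement at s
    have hstrict : lexGT (x s) 0 := by
      rw [hxeq s]
      refine lexGT_add ?_ (lexGE_sum _ _ fun s' _ => lexGE_smul ((hP s (π'' s)).1 s')
        (lexGE_mulVec (hΓ s (π'' s) s') (hge s')))
      rw [hc]
      simp only []
      rw [hπ'', Function.update_self]
      exact lexGT_sub_iff.mpr hlt
    -- contradiction with maximality of W π
    have hle : W π ≤ W π'' := fun t => lexGE_iff.mp (lexGE_sub_iff.mp (hge t))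
    have heq : W π = W π'' := le_antisymm hle (hπmax (Set.mem_univ _) hle)
    have heq' : Q π s (π s) = Q π'' s (π'' s) := toLex.injective (congrFun heq s)
    obtain ⟨k, -, hk⟩ := hstrict
    have hx0 : x s k = Q π'' s (π'' s) k - Q π s (π s) k := rfl
    simp only [Pi.zero_apply] at hk
    rw [hx0, heq'] at hk
    simp at hk
  -- dominance over an arbitrary policy π'
  intro π' s a
  set y : S → Fin d → ℝ := fun t => Q π t (π t) - Q π' t (π' t) with hy
  set c : S → Fin d → ℝ := fun t => Q π t (π t) - Q π t (π' t) with hc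
  have hyeq : ∀ t, y t = c t + ∑ s', P t (π' t) s' •
      (Γ t (π' t) s').mulVec (y s') := by
    intro t
    have h1 := halg π π' t (π' t)
    rw [hy, hc]
    simp only []
    rw [h1]
    abel
  have hge : ∀ t, lexGE (y t) 0 :=
    lemA (fun t s' => P t (π' t) s') (fun t s' => (hP t (π' t)).1 s')
      (fun t => le_of_eq (hP t (π' t)).2)
      (fun t s' => Γ t (π' t) s') (fun t s' => hΓ t (π' t) s')
      γ hγ0 hγ1 (fun t s' i => hGd t (π' t) s' i)
      c y (fun t => lexGE_sub_iff.mpr (hopt t (π' t))) hyeq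
  exact hdiff π π' (fun t => lexGE_sub_iff.mp (hge t)) s a
end

section
/- For any bounded sequence of vector rewards r_t in R^d and multiplier matrices Γ_t in LT+(d) with diagonal entries uniformly bounded above by some γ̄ < 1 and all entries uniformly bounded, the infinite lexicographic return defined as the limit of partial sums u_T = r_0 + Γ_0(r_1 + Γ_1(r_2 + ...)) (i.e., u_T = Σ_{t=0}^{T} (Γ_0 Γ_1 ⋯ Γ_{t−1}) r_t) converges in R^d as T → ∞. -/
lemma contract_aux {d : ℕ} (A : Matrix (Fin d) (Fin d) ℝ) (M γbar ε γ' B : ℝ)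
    (hA : ∀ i j : Fin d, i < j → A i j = 0)
    (hdiag : ∀ i, |A i i| ≤ γbar)
    (hb : ∀ i j, |A i j| ≤ M)
    (hε0 : 0 < ε) (hε1 : ε ≤ 1) (hM : 0 ≤ M) (hB : 0 ≤ B)
    (hγ' : γbar + ε * M * d ≤ γ')
    (v : Fin d → ℝ) (hv : ∀ j : Fin d, ε ^ (j : ℕ) * |v j| ≤ B) (i : Fin d) :
    ε ^ (i : ℕ) * |A.mulVec v i| ≤ γ' * B := by
  have hεMB : 0 ≤ ε * M * B := by positivity
  have hγb0 : 0 ≤ γbar := le_trans (abs_nonneg _) (hdiag i)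
  have step : ∀ j : Fin d,
      ε ^ (i : ℕ) * |A i j * v j| ≤ if j = i then γbar * B else ε * M * B := by
    intro j
    by_cases hji : j = i
    · subst hji
      simp only [if_pos rfl]
      rw [abs_mul, show ε ^ (j:ℕ) * (|A j j| * |v j|) = |A j j| * (ε ^ (j:ℕ) * |v j|) by ring]
      exact mul_le_mul (hdiag j) (hv j) (by positivity) hγb0
    · simp only [if_neg hji]
      rcases lt_or_gt_of_ne (fun h => hji (Fin.ext h)) with hlt | hgt
      · -- (j:ℕ) < i, so j < i as Fin
        have hij : (j:ℕ) ≤ (i:ℕ) := hlt.le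
        have hpow : ε ^ (i:ℕ) = ε ^ ((i:ℕ) - (j:ℕ)) * ε ^ (j:ℕ) := by
          rw [← pow_add, Nat.sub_add_cancel hij]
        rw [abs_mul, hpow,
          show ε ^ ((i:ℕ) - (j:ℕ)) * ε ^ (j:ℕ) * (|A i j| * |v j|)
            = (ε ^ ((i:ℕ) - (j:ℕ)) * |A i j|) * (ε ^ (j:ℕ) * |v j|) by ring]
        have h1 : ε ^ ((i:ℕ) - (j:ℕ)) ≤ ε := by
          have : 1 ≤ (i:ℕ) - (j:ℕ) := by omega
          calc ε ^ ((i:ℕ) - (j:ℕ)) ≤ ε ^ 1 := pow_le_pow_of_le_one hε0.le hε1 this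
            _ = ε := pow_one ε
        have h2 : ε ^ ((i:ℕ) - (j:ℕ)) * |A i j| ≤ ε * M :=
          mul_le_mul h1 (hb i j) (abs_nonneg _) hε0.le
        exact mul_le_mul h2 (hv j) (by positivity) (by positivity)
      · -- i < j so A i j = 0
        have : A i j = 0 := hA i j (by exact Fin.lt_def.mpr hgt)
        rw [this]
        simpa using hεMB
  calc ε ^ (i:ℕ) * |A.mulVec v i|
      ≤ ∑ j, ε ^ (i:ℕ) * |A i j * v j| := by
        rw [← Finset.mul_sum]
        refine mul_le_mul_of_nonneg_left ?_ (by positivity)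
        simpa [Matrix.mulVec, dotProduct] using
          Finset.abs_sum_le_sum_abs (fun j => A i j * v j) Finset.univ
    _ ≤ ∑ j, (if j = i then γbar * B else ε * M * B) :=
        Finset.sum_le_sum (fun j _ => step j)
    _ ≤ γbar * B + d * (ε * M * B) := by
        rw [← Finset.add_sum_erase _ _ (Finset.mem_univ i)]
        simp only [if_pos rfl]
        refine add_le_add (by simp) ?_
        calc ∑ j ∈ Finset.univ.erase i, (if j = i then γbar * B else ε * M * B)
            ≤ (Finset.univ.erase i).card • (ε * M * B) := by
              refine Finset.sum_le_card_nsmul _ _ _ (fun j hj => ?_)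
              rw [if_neg (Finset.ne_of_mem_erase hj)]
          _ = ((Finset.univ.erase i).card : ℝ) * (ε * M * B) := nsmul_eq_mul _ _
          _ ≤ d * (ε * M * B) := by
              refine mul_le_mul_of_nonneg_right ?_ hεMB
              have := Finset.card_erase_of_mem (Finset.mem_univ i)
              simp [this]
    _ ≤ γ' * B := by nlinarith [hγ', hB]

lemma prod_contract_aux {d : ℕ} (Γ : ℕ → Matrix (Fin d) (Fin d) ℝ) (M γbar ε γ' : ℝ)
    (hΓ : ∀ t, Γ t ∈ {A : Matrix (Fin d) (Fin d) ℝ |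
      (∀ i j : Fin d, i < j → A i j = 0) ∧ ∀ i : Fin d, 0 < A i i})
    (hdiag : ∀ t i, Γ t i i ≤ γbar)
    (hb : ∀ t i j, |Γ t i j| ≤ M)
    (hε0 : 0 < ε) (hε1 : ε ≤ 1) (hM : 0 ≤ M) (hγ'0 : 0 ≤ γ')
    (hγ' : γbar + ε * M * d ≤ γ') :
    ∀ (t : ℕ) (v : Fin d → ℝ) (B : ℝ), 0 ≤ B → (∀ j : Fin d, ε ^ (j : ℕ) * |v j| ≤ B) →
      ∀ i : Fin d, ε ^ (i : ℕ) * |(((List.range t).map Γ).prod).mulVec v i| ≤ γ' ^ t * B := by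
  intro t
  induction t with
  | zero => intro v B hB hv i; simpa [Matrix.one_mulVec] using hv i
  | succ t ih =>
      intro v B hB hv i
      have hprod : ((List.range (t+1)).map Γ).prod
          = ((List.range t).map Γ).prod * Γ t := by
        rw [List.range_succ, List.map_append, List.prod_append]
        simp
      have hdiag' : ∀ i : Fin d, |Γ t i i| ≤ γbar := fun i => by
        rw [abs_of_pos ((hΓ t).2 i)]; exact hdiag t i
      have key := contract_aux (Γ t) M γbar ε γ' B (hΓ t).1 hdiag' (hb t)
        hε0 hε1 hM hB hγ' v hv
      have := ih ((Γ t).mulVec v) (γ' * B) (by positivity) key i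
      rw [hprod, ← Matrix.mulVec_mulVec]
      calc ε ^ (i:ℕ) * |(((List.range t).map Γ).prod).mulVec ((Γ t).mulVec v) i|
          ≤ γ' ^ t * (γ' * B) := this
        _ = γ' ^ (t+1) * B := by ring

/-- The infinite lexicographic return converges: the partial sums
`u_T = Σ_{t=0}^{T} (Γ_0 Γ_1 ⋯ Γ_{t-1}) r_t` converge in `ℝ^d` as `T → ∞`. -/
theorem stmt_16 {d : ℕ}
    (Γ : ℕ → Matrix (Fin d) (Fin d) ℝ) (r : ℕ → Fin d → ℝ)
    (M γbar : ℝ) (hγbar : γbar < 1)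
    (hΓ : ∀ t, Γ t ∈ LTpos d)
    (hdiag : ∀ t i, Γ t i i ≤ γbar)
    (hbound : ∀ t i j, |Γ t i j| ≤ M)
    (hr : ∀ t, ‖r t‖ ≤ M) :
    ∃ L : Fin d → ℝ,
      Filter.Tendsto
        (fun T : ℕ => ∑ t ∈ Finset.range (T + 1),
          (((List.range t).map Γ).prod).mulVec (r t))
        Filter.atTop (nhds L) := by
  rcases Nat.eq_zero_or_pos d with hd | hd
  · subst hd
    refine ⟨0, ?_⟩
    have : (fun T : ℕ => ∑ t ∈ Finset.range (T + 1),
        (((List.range t).map Γ).prod).mulVec (r t)) = fun _ => 0 := by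
      funext T; exact Subsingleton.elim _ _
    rw [this]; exact tendsto_const_nhds
  · set i0 : Fin d := ⟨0, hd⟩
    have hγ0 : 0 < γbar := lt_of_lt_of_le ((hΓ 0).2 i0) (hdiag 0 i0)
    have hM0 : 0 < M :=
      lt_of_lt_of_le ((hΓ 0).2 i0) (le_trans (le_abs_self _) (hbound 0 i0 i0))
    set ε : ℝ := min 1 ((1 - γbar) / (2 * M * d)) with hεdef
    have hε0 : 0 < ε := by
      refine lt_min one_pos ?_
      have : (0:ℝ) < 2 * M * d := by positivity
      exact div_pos (by linarith) this
    have hε1 : ε ≤ 1 := min_le_left _ _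
    set γ' : ℝ := (1 + γbar) / 2 with hγ'def
    have hγ'0 : 0 ≤ γ' := by rw [hγ'def]; linarith
    have hγ'1 : γ' < 1 := by rw [hγ'def]; linarith
    have hγ' : γbar + ε * M * d ≤ γ' := by
      have h1 : ε ≤ (1 - γbar) / (2 * M * d) := min_le_right _ _
      have h2 : (0:ℝ) < 2 * M * d := by positivity
      have h3 : ε * (2 * M * d) ≤ 1 - γbar := by
        calc ε * (2 * M * d) ≤ ((1 - γbar) / (2 * M * d)) * (2 * M * d) :=
              mul_le_mul_of_nonneg_right h1 h2.le
          _ = 1 - γbar := div_mul_cancel₀ _ h2.ne'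
      rw [hγ'def]; nlinarith
    have key := prod_contract_aux Γ M γbar ε γ' hΓ hdiag hbound hε0 hε1 hM0.le hγ'0 hγ'
    set u : ℕ → Fin d → ℝ := fun t => (((List.range t).map Γ).prod).mulVec (r t) with hu
    set C : ℝ := M / ε ^ d with hC
    have hC0 : 0 ≤ C := by positivity
    have hub : ∀ t, ‖u t‖ ≤ C * γ' ^ t := by
      intro t
      have hv : ∀ j : Fin d, ε ^ (j : ℕ) * |r t j| ≤ M := by
        intro j
        calc ε ^ (j:ℕ) * |r t j| ≤ 1 * M := by
              refine mul_le_mul (pow_le_one₀ hε0.le hε1) ?_ (abs_nonneg _) one_pos.le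
              exact le_trans (norm_le_pi_norm (r t) j) (hr t)
          _ = M := one_mul M
      refine (pi_norm_le_iff_of_nonneg (by positivity)).mpr (fun i => ?_)
      have h1 := key t (r t) M hM0.le hv i
      have h2 : ε ^ d ≤ ε ^ (i : ℕ) := pow_le_pow_of_le_one hε0.le hε1 i.2.le
      have hεi : 0 < ε ^ (i : ℕ) := by positivity
      have hεd : 0 < ε ^ d := by positivity
      rw [Real.norm_eq_abs]
      rw [hC, div_mul_eq_mul_div, le_div_iff₀ hεd]
      calc |u t i| * ε ^ d ≤ |u t i| * ε ^ (i:ℕ) :=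
            mul_le_mul_of_nonneg_left h2 (abs_nonneg _)
        _ ≤ γ' ^ t * M := by rw [mul_comm]; exact h1
        _ = M * γ' ^ t := mul_comm _ _
    have hsum : Summable u := by
      refine Summable.of_norm_bounded (g := fun t => C * γ' ^ t) ?_ hub
      exact (summable_geometric_of_lt_one hγ'0 hγ'1).mul_left C
    obtain ⟨L, hL⟩ := hsum
    refine ⟨L, ?_⟩
    have h := hL.tendsto_sum_nat
    exact h.comp (Filter.tendsto_add_atTop_nat 1)
end

section
/- Safety First implies violation of continuity: suppose ≿ on Δ(O) is complete and transitive, satisfies Safety First with respect to o†, and there exist safe lotteries p, q with p ≻ q. Then continuity fails: there is no α in [0,1] such that α p + (1−α) o† is indifferent to q. -/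
variable {O : Type*} [Fintype O] [DecidableEq O]

/-- Safety First implies violation of continuity: if `p ≻ q` are safe
lotteries, then no mixture `α p + (1-α) o†` with `α ∈ [0,1]` is indifferent
to `q`. -/
theorem stmt_18 (odag : O) (pref : (O → ℝ) → (O → ℝ) → Prop)
    (hcomplete : ∀ p q : O → ℝ, IsLottery p → IsLottery q → pref p q ∨ pref q p)
    (htrans : ∀ p q r : O → ℝ, IsLottery p → IsLottery q → IsLottery r →
      pref p q → pref q r → pref p r)
    (hsafety : ∀ p q : O → ℝ, SafeLottery pref odag p → SafeLottery pref odag q →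
      ∀ ε : ℝ, 0 < ε → ε ≤ 1 → ¬ pref (ε • dirac odag + (1 - ε) • p) q)
    (p q : O → ℝ) (hp : SafeLottery pref odag p) (hq : SafeLottery pref odag q)
    (hstrict : pref p q ∧ ¬ pref q p) :
    ∀ α : ℝ, 0 ≤ α → α ≤ 1 →
      ¬ Indiff pref (α • p + (1 - α) • dirac odag) q := by
  intro α h0 h1 hind
  rcases eq_or_lt_of_le h1 with h | h
  · have hmix : α • p + (1 - α) • dirac odag = p := by
      subst h; funext o; simp
    rw [hmix] at hind
    exact hstrict.2 hind.2
  · have hmix : α • p + (1 - α) • dirac odag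
        = (1 - α) • dirac odag + (1 - (1 - α)) • p := by
      ring_nf
    rw [hmix] at hind
    exact hsafety p q hp hq (1 - α) (by linarith) (by linarith) hind.1
end
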